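/- In B₆, let ψ₁ = σ₄σ₅⁻¹σ₂⁻¹σ₁ and ψ₂ = σ₄⁻¹σ₅²σ₂σ₁⁻², and set a = ψ₁⁻¹σ₃ψ₁, b = ψ₂⁻¹σ₃ψ₂, and δ = a⁻¹b⁻¹ab. Then δ is not the identity element of B₆ (equivalently, a and b do not commute in B₆). -/

import Mathlib

open LaurentPolynomial

/-- The ring `Λ = ℤ[t,t⁻¹]` of Laurent polynomials over `ℤ`. -/
abbrev Λ : Type := LaurentPolynomial ℤ

/-- The braid relations on `m` generators `σ_1, …, σ_m` (indexed here by `Fin m`,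
with index `i : Fin m` corresponding to the Artin generator `σ_{i+1}`). -/
def braidRels (m : ℕ) : Set (FreeGroup (Fin m)) :=
  { r | (∃ i j : Fin m, (i : ℕ) + 2 ≤ (j : ℕ) ∧
          r = FreeGroup.of i * FreeGroup.of j * (FreeGroup.of i)⁻¹ * (FreeGroup.of j)⁻¹) ∨
        (∃ i j : Fin m, (i : ℕ) + 1 = (j : ℕ) ∧
          r = FreeGroup.of i * FreeGroup.of j * FreeGroup.of i *
              (FreeGroup.of j * FreeGroup.of i * FreeGroup.of j)⁻¹) }

/-- The braid group `B_n`, presented on `n - 1` generators with the braid relations. -/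
abbrev BraidGroup (n : ℕ) : Type := PresentedGroup (braidRels (n - 1))

/-- The Artin generator: `σ i` corresponds to the classical `σ_{i+1}` (0-indexed). -/
def σ {n : ℕ} (i : Fin (n - 1)) : BraidGroup n := PresentedGroup.of i

/-- The `i`-th reduced Burau matrix (0-indexed: `burauMatrix m i` is the matrix `B_{i+1}`
of the classical generator `σ_{i+1}`): it agrees with the identity except in row `i`,
where the entries are `t` in column `i-1`, `-t` in column `i`, `1` in column `i+1`. -/
noncomputable def burauMatrix (m : ℕ) (i : Fin m) : Matrix (Fin m) (Fin m) Λ :=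
  fun r c =>
    if r = i then
      if (c : ℕ) + 1 = (i : ℕ) then T 1
      else if c = i then - T 1
      else if (c : ℕ) = (i : ℕ) + 1 then 1
      else 0
    else if r = c then 1 else 0

/-- The classical Artin generators `σ₁, …, σ₅` of `B₆`. -/
def s₁ : BraidGroup 6 := σ ⟨0, by norm_num⟩
def s₂ : BraidGroup 6 := σ ⟨1, by norm_num⟩
def s₃ : BraidGroup 6 := σ ⟨2, by norm_num⟩
def s₄ : BraidGroup 6 := σ ⟨3, by norm_num⟩
def s₅ : BraidGroup 6 := σ ⟨4, by norm_num⟩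

/-- `ψ₁ = σ₄ σ₅⁻¹ σ₂⁻¹ σ₁`. -/
def ψ₁ : BraidGroup 6 := s₄ * s₅⁻¹ * s₂⁻¹ * s₁

/-- `ψ₂ = σ₄⁻¹ σ₅² σ₂ σ₁⁻²`. -/
def ψ₂ : BraidGroup 6 := s₄⁻¹ * s₅ ^ 2 * s₂ * (s₁ ^ 2)⁻¹

/-- `a = ψ₁⁻¹ σ₃ ψ₁`. -/
def a : BraidGroup 6 := ψ₁⁻¹ * s₃ * ψ₁

/-- `b = ψ₂⁻¹ σ₃ ψ₂`. -/
def b : BraidGroup 6 := ψ₂⁻¹ * s₃ * ψ₂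

/-- `δ = [a, b] = a⁻¹ b⁻¹ a b`. -/
def δ : BraidGroup 6 := a⁻¹ * b⁻¹ * a * b



section HurwitzAction

/-- Target finite group `S₃`. -/
abbrev K : Type := Equiv.Perm (Fin 3)

def fwd (i : Fin 5) (v : Fin 6 → K) : Fin 6 → K := fun j =>
  if j = i.castSucc then v i.castSucc * v i.succ * (v i.castSucc)⁻¹
  else if j = i.succ then v i.castSucc
  else v j

def bwd (i : Fin 5) (v : Fin 6 → K) : Fin 6 → K := fun j =>
  if j = i.castSucc then v i.succ
  else if j = i.succ then (v i.succ)⁻¹ * v i.castSucc * v i.succ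
  else v j

set_option linter.unnecessarySeqFocus false in
def hur (i : Fin 5) : Equiv.Perm (Fin 6 → K) where
  toFun := fwd i
  invFun := bwd i
  left_inv := by
    intro v; funext j
    have h := (Fin.castSucc_lt_succ : i.castSucc < i.succ).ne
    simp only [fwd, bwd]
    split_ifs with h1 h2 <;> simp_all <;> group
  right_inv := by
    intro v; funext j
    have h := (Fin.castSucc_lt_succ : i.castSucc < i.succ).ne
    simp only [fwd, bwd]
    split_ifs with h1 h2 <;> simp_all <;> group

theorem hur_comm (i j : Fin 5) (hij : (i:ℕ) + 2 ≤ (j:ℕ)) :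
    hur i * hur j = hur j * hur i := by
  have d1 : i.castSucc ≠ j.castSucc := by simp [Fin.ext_iff]; omega
  have d2 : i.succ ≠ j.castSucc := by simp [Fin.ext_iff]; omega
  have d3 : i.castSucc ≠ j.succ := by simp [Fin.ext_iff]; omega
  have d4 : i.succ ≠ j.succ := by simp [Fin.ext_iff]; omega
  have d5 : i.castSucc ≠ i.succ := (Fin.castSucc_lt_succ : i.castSucc < i.succ).ne
  have d6 : j.castSucc ≠ j.succ := (Fin.castSucc_lt_succ : j.castSucc < j.succ).ne
  apply Equiv.ext; intro v; funext k
  show fwd i (fwd j v) k = fwd j (fwd i v) k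
  simp only [fwd]
  split_ifs <;> simp_all

set_option linter.unnecessarySeqFocus false in
theorem hur_braid (i j : Fin 5) (hij : (i:ℕ) + 1 = (j:ℕ)) :
    hur i * hur j * hur i = hur j * hur i * hur j := by
  have e1 : j.castSucc = i.succ := by simp [Fin.ext_iff]; omega
  have d1 : i.castSucc ≠ i.succ := (Fin.castSucc_lt_succ : i.castSucc < i.succ).ne
  have d2 : i.succ ≠ j.succ := by simp [Fin.ext_iff]; omega
  have d3 : i.castSucc ≠ j.succ := by simp [Fin.ext_iff]; omega
  apply Equiv.ext; intro v; funext k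
  show fwd i (fwd j (fwd i v)) k = fwd j (fwd i (fwd j v)) k
  simp only [fwd, e1]
  split_ifs <;> simp_all <;> group

theorem hur_rels : ∀ r ∈ braidRels 5, (FreeGroup.lift hur) r = 1 := by
  rintro r (⟨i, j, hij, rfl⟩ | ⟨i, j, hij, rfl⟩) <;>
    simp only [map_mul, map_inv, FreeGroup.lift_apply_of, mul_inv_rev]
  · rw [mul_inv_eq_one, mul_inv_eq_iff_eq_mul]
    exact hur_comm i j hij
  · rw [← mul_inv_rev, ← mul_inv_rev, mul_inv_eq_one]
    exact hur_braid i j hij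

def F : BraidGroup 6 →* Equiv.Perm (Fin 6 → K) := PresentedGroup.toGroup hur_rels

lemma hF1 : F s₁ = hur 0 := PresentedGroup.toGroup.of hur_rels
lemma hF2 : F s₂ = hur 1 := PresentedGroup.toGroup.of hur_rels
lemma hF3 : F s₃ = hur 2 := PresentedGroup.toGroup.of hur_rels
lemma hF4 : F s₄ = hur 3 := PresentedGroup.toGroup.of hur_rels
lemma hF5 : F s₅ = hur 4 := PresentedGroup.toGroup.of hur_rels

def pa : K := Equiv.swap 0 1
def pb : K := Equiv.swap 0 2
def pc : K := Equiv.swap 1 2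
def pd : K := Equiv.swap 0 2 * Equiv.swap 0 1
def pe : K := Equiv.swap 0 1 * Equiv.swap 0 2
def V0 : Fin 6 → K := ![pb, pd, pa, pb, pc, pe]
def V1 : Fin 6 → K := ![pd, pc, pa, pb, pc, pe]
def V2 : Fin 6 → K := ![pc, pe, pa, pb, pc, pe]
def V3 : Fin 6 → K := ![pc, pb, pe, pb, pc, pe]
def V4 : Fin 6 → K := ![pc, pb, pe, pb, pd, pc]
def V5 : Fin 6 → K := ![pc, pb, pe, pb, pb, pd]
def V6 : Fin 6 → K := ![pc, pb, pe, pb, pb, pd]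
def V7 : Fin 6 → K := ![pc, pb, pc, pe, pb, pd]
def V8 : Fin 6 → K := ![pc, pb, pc, pc, pe, pd]
def V9 : Fin 6 → K := ![pc, pb, pc, pc, pd, pe]
def V10 : Fin 6 → K := ![pc, pb, pc, pc, pe, pd]
def V11 : Fin 6 → K := ![pc, pc, pa, pc, pe, pd]
def V12 : Fin 6 → K := ![pc, pc, pa, pc, pe, pd]
def V13 : Fin 6 → K := ![pc, pc, pa, pc, pe, pd]
def V14 : Fin 6 → K := ![pc, pc, pa, pc, pe, pd]
def V15 : Fin 6 → K := ![pc, pa, pb, pc, pe, pd]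
def V16 : Fin 6 → K := ![pc, pa, pb, pc, pd, pe]
def V17 : Fin 6 → K := ![pc, pa, pb, pe, pc, pe]
def V18 : Fin 6 → K := ![pc, pa, pd, pb, pc, pe]
def V19 : Fin 6 → K := ![pc, pa, pd, pc, pa, pe]
def V20 : Fin 6 → K := ![pc, pa, pd, pc, pd, pa]
def V21 : Fin 6 → K := ![pc, pe, pa, pc, pd, pa]
def V22 : Fin 6 → K := ![pe, pb, pa, pc, pd, pa]
def V23 : Fin 6 → K := ![pb, pd, pa, pc, pd, pa]
def V24 : Fin 6 → K := ![pd, pc, pa, pc, pd, pa]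
def V25 : Fin 6 → K := ![pd, pb, pc, pc, pd, pa]
def V26 : Fin 6 → K := ![pd, pb, pc, pc, pc, pd]
def V27 : Fin 6 → K := ![pd, pb, pc, pc, pe, pc]
def V28 : Fin 6 → K := ![pd, pb, pc, pe, pb, pc]
def V29 : Fin 6 → K := ![pd, pb, pe, pb, pb, pc]
def V30 : Fin 6 → K := ![pd, pb, pe, pb, pb, pc]
def V31 : Fin 6 → K := ![pd, pb, pe, pb, pc, pa]
def V32 : Fin 6 → K := ![pd, pb, pe, pb, pa, pb]
def V33 : Fin 6 → K := ![pd, pe, pa, pb, pa, pb]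
def V34 : Fin 6 → K := ![pe, pd, pa, pb, pa, pb]
def V35 : Fin 6 → K := ![pd, pe, pa, pb, pa, pb]
def V36 : Fin 6 → K := ![pe, pd, pa, pb, pa, pb]
def V37 : Fin 6 → K := ![pe, pa, pe, pb, pa, pb]
def V38 : Fin 6 → K := ![pe, pa, pe, pb, pb, pc]
def V39 : Fin 6 → K := ![pe, pa, pe, pb, pb, pc]
def V40 : Fin 6 → K := ![pe, pa, pb, pd, pb, pc]
def V41 : Fin 6 → K := ![pe, pa, pb, pb, pe, pc]
def V42 : Fin 6 → K := ![pe, pa, pb, pb, pa, pe]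
def V43 : Fin 6 → K := ![pe, pc, pa, pb, pa, pe]
def V44 : Fin 6 → K := ![pc, pd, pa, pb, pa, pe]
lemma step0 : (hur 0)⁻¹ V0 = V1 := by decide
lemma step1 : (hur 0)⁻¹ V1 = V2 := by decide
lemma step2 : hur 1 V2 = V3 := by decide
lemma step3 : hur 4 V3 = V4 := by decide
lemma step4 : hur 4 V4 = V5 := by decide
lemma step5 : (hur 3)⁻¹ V5 = V6 := by decide
lemma step6 : hur 2 V6 = V7 := by decide
lemma step7 : hur 3 V7 = V8 := by decide
lemma step8 : (hur 4)⁻¹ V8 = V9 := by decide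
lemma step9 : (hur 4)⁻¹ V9 = V10 := by decide
lemma step10 : (hur 1)⁻¹ V10 = V11 := by decide
lemma step11 : hur 0 V11 = V12 := by decide
lemma step12 : hur 0 V12 = V13 := by decide
lemma step13 : hur 0 V13 = V14 := by decide
lemma step14 : (hur 1)⁻¹ V14 = V15 := by decide
lemma step15 : (hur 4)⁻¹ V15 = V16 := by decide
lemma step16 : hur 3 V16 = V17 := by decide
lemma step17 : hur 2 V17 = V18 := by decide
lemma step18 : (hur 3)⁻¹ V18 = V19 := by decide
lemma step19 : hur 4 V19 = V20 := by decide
lemma step20 : hur 1 V20 = V21 := by decide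
lemma step21 : (hur 0)⁻¹ V21 = V22 := by decide
lemma step22 : (hur 0)⁻¹ V22 = V23 := by decide
lemma step23 : (hur 0)⁻¹ V23 = V24 := by decide
lemma step24 : hur 1 V24 = V25 := by decide
lemma step25 : hur 4 V25 = V26 := by decide
lemma step26 : hur 4 V26 = V27 := by decide
lemma step27 : (hur 3)⁻¹ V27 = V28 := by decide
lemma step28 : (hur 2)⁻¹ V28 = V29 := by decide
lemma step29 : hur 3 V29 = V30 := by decide
lemma step30 : (hur 4)⁻¹ V30 = V31 := by decide
lemma step31 : (hur 4)⁻¹ V31 = V32 := by decide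
lemma step32 : (hur 1)⁻¹ V32 = V33 := by decide
lemma step33 : hur 0 V33 = V34 := by decide
lemma step34 : hur 0 V34 = V35 := by decide
lemma step35 : hur 0 V35 = V36 := by decide
lemma step36 : (hur 1)⁻¹ V36 = V37 := by decide
lemma step37 : (hur 4)⁻¹ V37 = V38 := by decide
lemma step38 : hur 3 V38 = V39 := by decide
lemma step39 : (hur 2)⁻¹ V39 = V40 := by decide
lemma step40 : (hur 3)⁻¹ V40 = V41 := by decide
lemma step41 : hur 4 V41 = V42 := by decide
lemma step42 : hur 1 V42 = V43 := by decide
lemma step43 : (hur 0)⁻¹ V43 = V44 := by decide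
-- steps list: step0, step1, step2, step3, step4, step5, step6, step7, step8, step9, step10, step11, step12, step13, step14, step15, step16, step17, step18, step19, step20, step21, step22, step23, step24, step25, step26, step27, step28, step29, step30, step31, step32, step33, step34, step35, step36, step37, step38, step39, step40, step41, step42, step43

end HurwitzAction

/-- The braid `δ ∈ B₆` is a nontrivial element: `a` and `b` do not commute in `B₆`. -/
theorem b6_braid_ne_one : δ ≠ 1 := by
  intro h
  have h0 : F δ V0 = V0 := by rw [h, map_one]; rfl
  have h1 : F δ V0 = V44 := by
    simp only [δ, a, b, ψ₁, ψ₂, pow_two, mul_inv_rev, inv_inv, map_mul, map_inv,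
      hF1, hF2, hF3, hF4, hF5, Equiv.Perm.mul_apply, step0, step1, step2, step3, step4, step5, step6, step7, step8, step9, step10, step11, step12, step13, step14, step15, step16, step17, step18, step19, step20, step21, step22, step23, step24, step25, step26, step27, step28, step29, step30, step31, step32, step33, step34, step35, step36, step37, step38, step39, step40, step41, step42, step43]
  exact (by decide : V0 ≠ V44) (h0.symm.trans h1)
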